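/- Let ψ ∈ C⁴(ℝ) with ψ' > 0 and ψ(x + 2) = ψ(x) + 2 for all x. Let K ≥ 1, h = 1/K, and define the smooth mesh h_k = ψ(hk) − ψ(h(k−1)) for k ∈ ℤ, and ω̂_k = (h_{k−1} − 2h_k + h_{k+1})/(4h_k). Then there exist h₀ > 0 and C > 0, depending only on ψ, such that for all h ≤ h₀ and all k, |ω̂_k − ¼ h² ψ'''(x̄_k)/ψ'(x̄_k)| ≤ C h³, where x̄_k = (k − ½)h. In particular |ω̂_k| ≤ C' h² with C' = ¼ max_{x∈[−1,1]} |ψ'''(x)/ψ'(x)| + C h₀. -/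

import Mathlib

set_option maxHeartbeats 1000000

open Set

private lemma aux_within (f : ℝ → ℝ) (hf : ContDiff ℝ 4 f) {a b : ℝ} (hab : a < b)
    {m : ℕ} (hm : m ≤ 4) {y : ℝ} (hy : y ∈ Set.Icc a b) :
    iteratedDerivWithin m f (Set.Icc a b) y = iteratedDeriv m f y := by
  have H : HasFTaylorSeriesUpToOn 4 f (ftaylorSeries ℝ f) Set.univ := by
    rw [← ftaylorSeriesWithin_univ]
    exact (contDiffOn_univ.mpr hf).ftaylorSeriesWithin uniqueDiffOn_univ
  have H2 := (H.mono (Set.subset_univ _)).eq_iteratedFDerivWithin_of_uniqueDiffOn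
    (by exact_mod_cast hm) (uniqueDiffOn_Icc hab) hy
  rw [iteratedDerivWithin_eq_iteratedFDerivWithin, iteratedDeriv_eq_iteratedFDeriv, ← H2]
  rfl

private lemma taylor4_nonneg (f : ℝ → ℝ) (hf : ContDiff ℝ 4 f) (M : ℝ)
    (hM : ∀ y : ℝ, |iteratedDeriv 4 f y| ≤ M) (m t : ℝ) (ht : 0 ≤ t) :
    |f (m + t) - (f m + t * iteratedDeriv 1 f m + t ^ 2 / 2 * iteratedDeriv 2 f m
      + t ^ 3 / 6 * iteratedDeriv 3 f m)| ≤ M * t ^ 4 / 6 := by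
  rcases eq_or_lt_of_le ht with h0 | ht
  · simp [← h0]
  have hab : m < m + t := by linarith
  have key := taylor_mean_remainder_bound (f := f) (a := m) (b := m + t) (n := 3)
    hab.le (hf.contDiffOn) (right_mem_Icc.mpr hab.le)
    (fun y hy => by
      rw [Real.norm_eq_abs, aux_within f hf hab (le_refl 4) hy]
      exact hM y)
  rw [taylor_within_apply] at key
  have e1 := aux_within f hf hab (by norm_num : (1:ℕ) ≤ 4) (left_mem_Icc.mpr hab.le)
  have e2 := aux_within f hf hab (by norm_num : (2:ℕ) ≤ 4) (left_mem_Icc.mpr hab.le)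
  have e3 := aux_within f hf hab (by norm_num : (3:ℕ) ≤ 4) (left_mem_Icc.mpr hab.le)
  have e0 : iteratedDerivWithin 0 f (Set.Icc m (m + t)) m = f m := by
    rw [iteratedDerivWithin_zero]
  simp only [Finset.sum_range_succ, Finset.sum_range_zero, e0, e1, e2, e3, smul_eq_mul,
    Real.norm_eq_abs] at key
  refine le_trans (le_of_eq ?_) (key.trans (le_of_eq ?_))
  · congr 1
    simp [Nat.factorial]
    try ring
  · simp [Nat.factorial]
    try ring

private lemma taylor4 (f : ℝ → ℝ) (hf : ContDiff ℝ 4 f) (M : ℝ)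
    (hM : ∀ y : ℝ, |iteratedDeriv 4 f y| ≤ M) (m t : ℝ) :
    |f (m + t) - (f m + t * iteratedDeriv 1 f m + t ^ 2 / 2 * iteratedDeriv 2 f m
      + t ^ 3 / 6 * iteratedDeriv 3 f m)| ≤ M * t ^ 4 / 6 := by
  rcases le_or_gt 0 t with ht | ht
  · exact taylor4_nonneg f hf M hM m t ht
  · have hgc : ContDiff ℝ 4 (fun x => f (-x)) := hf.comp contDiff_neg
    have hgd : ∀ (k : ℕ) (y : ℝ),
        iteratedDeriv k (fun x => f (-x)) y = (-1 : ℝ) ^ k * iteratedDeriv k f (-y) := by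
      intro k y
      rw [iteratedDeriv_comp_neg]
      simp [smul_eq_mul]
    have key := taylor4_nonneg (fun x => f (-x)) hgc M
      (fun y => by rw [hgd 4 y]; norm_num; exact hM (-y)) (-m) (-t) (by linarith)
    rw [hgd 1, hgd 2, hgd 3] at key
    simp only [neg_neg] at key
    rw [show -(-m + -t) = m + t from by ring] at key
    have harg : f (m + t) - (f m + t * iteratedDeriv 1 f m + t ^ 2 / 2 * iteratedDeriv 2 f m
        + t ^ 3 / 6 * iteratedDeriv 3 f m) =
        f (m + t) - (f m + -t * ((-1) ^ 1 * iteratedDeriv 1 f m)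
          + (-t) ^ 2 / 2 * ((-1) ^ 2 * iteratedDeriv 2 f m)
          + (-t) ^ 3 / 6 * ((-1) ^ 3 * iteratedDeriv 3 f m)) := by ring
    have hpow : M * t ^ 4 / 6 = M * (-t) ^ 4 / 6 := by ring
    rw [harg, hpow]
    exact key

private lemma per_iter (ψ : ℝ → ℝ) (hper : ∀ x : ℝ, ψ (x + 2) = ψ x + 2) (n : ℕ) :
    Function.Periodic (iteratedDeriv (n + 1) ψ) 2 := by
  intro x
  have e2 : (fun z => ψ (z + 2)) = fun z => ψ z + 2 := funext hper
  have e1 : iteratedDeriv (n + 1) (fun z => ψ (z + 2)) x = iteratedDeriv (n + 1) ψ (x + 2) :=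
    congrFun (iteratedDeriv_comp_add_const (n + 1) ψ 2) x
  rw [e2] at e1
  rw [← e1, iteratedDeriv_succ', iteratedDeriv_succ']
  congr 1
  funext y
  exact deriv_add_const 2

private lemma per_bound {g : ℝ → ℝ} (hper : Function.Periodic g 2) (x : ℝ) :
    ∃ y ∈ Set.Icc (-1 : ℝ) 1, g x = g y := by
  obtain ⟨y, hy, hxy⟩ := hper.exists_mem_Ico (by norm_num) x (-1)
  exact ⟨y, ⟨hy.1, by linarith [hy.2]⟩, hxy⟩

private lemma est0 (h δ M1 M3 M4 S d1 d3 N D : ℝ)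
    (hh : 0 < h) (hh1 : h ≤ 1) (hδ : 0 < δ) (hM4 : 0 ≤ M4)
    (hEN : |N - h ^ 3 * d3| ≤ 2 * M4 * h ^ 4)
    (hED : |D - (h * d1 + h ^ 3 / 24 * d3)| ≤ M4 * h ^ 4 / 48)
    (hd1l : δ ≤ d1) (hd1u : |d1| ≤ M1) (hd3 : |d3| ≤ M3)
    (hD0 : δ * h ≤ D) (hq : |d3 / d1| ≤ S) :
    |N / (4 * D) - 1 / 4 * h ^ 2 * (d3 / d1)|
      ≤ ((2 * M4 * M1 + M3 ^ 2 + M3 * M4) / (4 * δ ^ 2) + 1) * h ^ 3 ∧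
    |N / (4 * D)|
      ≤ (1 / 4 * S + ((2 * M4 * M1 + M3 ^ 2 + M3 * M4) / (4 * δ ^ 2) + 1) * 1) * h ^ 2 := by
  have hd1p : 0 < d1 := lt_of_lt_of_le hδ hd1l
  have hDp : 0 < D := lt_of_lt_of_le (mul_pos hδ hh) hD0
  have hM3 : 0 ≤ M3 := (abs_nonneg d3).trans hd3
  have hM1 : 0 ≤ M1 := (abs_nonneg d1).trans hd1u
  have hd3sq : d3 ^ 2 ≤ M3 ^ 2 := by nlinarith [sq_abs d3, abs_nonneg d3]
  have h54 : h ^ 5 ≤ h ^ 4 := by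
    nlinarith [mul_le_mul_of_nonneg_left hh1 (pow_nonneg hh.le 4)]
  have h64 : h ^ 6 ≤ h ^ 4 := by
    nlinarith [mul_le_mul_of_nonneg_left (mul_le_mul hh1 hh1 hh.le zero_le_one)
      (pow_nonneg hh.le 4)]
  have h32 : h ^ 3 ≤ h ^ 2 := by
    nlinarith [mul_le_mul_of_nonneg_left hh1 (pow_nonneg hh.le 2)]
  have eqkey : N / (4 * D) - 1 / 4 * h ^ 2 * (d3 / d1) =
      ((N - h ^ 3 * d3) * d1 - h ^ 5 * d3 ^ 2 / 24
        - h ^ 2 * d3 * (D - (h * d1 + h ^ 3 / 24 * d3))) / (4 * D * d1) := by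
    field_simp
    ring
  have n1 : |(N - h ^ 3 * d3) * d1| ≤ 2 * M4 * h ^ 4 * M1 := by
    rw [abs_mul]
    exact mul_le_mul hEN hd1u (abs_nonneg _) (by positivity)
  have n2 : |h ^ 5 * d3 ^ 2 / 24| ≤ M3 ^ 2 * h ^ 4 := by
    rw [abs_of_nonneg (by positivity)]
    linarith only [mul_le_mul_of_nonneg_right h54 (sq_nonneg d3),
      mul_le_mul_of_nonneg_left hd3sq (pow_nonneg hh.le 4),
      mul_nonneg (sq_nonneg M3) (pow_nonneg hh.le 4)]
  have n3 : |h ^ 2 * d3 * (D - (h * d1 + h ^ 3 / 24 * d3))| ≤ M3 * M4 * h ^ 4 := by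
    rw [abs_mul, abs_mul, abs_of_nonneg (pow_nonneg hh.le 2)]
    have step : h ^ 2 * |d3| * |D - (h * d1 + h ^ 3 / 24 * d3)|
        ≤ h ^ 2 * M3 * (M4 * h ^ 4 / 48) := by
      apply mul_le_mul _ hED (abs_nonneg _) (by positivity)
      exact mul_le_mul_of_nonneg_left hd3 (pow_nonneg hh.le 2)
    refine step.trans ?_
    linarith only [mul_le_mul_of_nonneg_left h64 (mul_nonneg hM3 hM4),
      mul_nonneg (mul_nonneg hM3 hM4) (pow_nonneg hh.le 6)]
  have hnum : |(N - h ^ 3 * d3) * d1 - h ^ 5 * d3 ^ 2 / 24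
      - h ^ 2 * d3 * (D - (h * d1 + h ^ 3 / 24 * d3))|
      ≤ (2 * M4 * M1 + M3 ^ 2 + M3 * M4) * h ^ 4 := by
    have a1 := abs_le.mp n1
    have a2 := abs_le.mp n2
    have a3 := abs_le.mp n3
    rw [abs_le]
    constructor
    · linarith only [a1.1, a2.2, a3.2]
    · linarith only [a1.2, a2.1, a3.1]
  have hden : 4 * (δ * δ) * h ≤ |4 * D * d1| := by
    rw [abs_of_pos (by positivity)]
    linarith only [mul_le_mul hD0 hd1l hδ.le hDp.le]
  have G1 : |N / (4 * D) - 1 / 4 * h ^ 2 * (d3 / d1)|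
      ≤ ((2 * M4 * M1 + M3 ^ 2 + M3 * M4) / (4 * δ ^ 2) + 1) * h ^ 3 := by
    rw [eqkey, abs_div]
    calc |(N - h ^ 3 * d3) * d1 - h ^ 5 * d3 ^ 2 / 24
          - h ^ 2 * d3 * (D - (h * d1 + h ^ 3 / 24 * d3))| / |4 * D * d1|
        ≤ ((2 * M4 * M1 + M3 ^ 2 + M3 * M4) * h ^ 4) / (4 * (δ * δ) * h) :=
          div_le_div₀ (by positivity) hnum (by positivity) hden
      _ = (2 * M4 * M1 + M3 ^ 2 + M3 * M4) / (4 * δ ^ 2) * h ^ 3 := by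
          field_simp
      _ ≤ ((2 * M4 * M1 + M3 ^ 2 + M3 * M4) / (4 * δ ^ 2) + 1) * h ^ 3 := by
          linarith only [pow_pos hh 3]
  refine ⟨G1, ?_⟩
  have habs : |1 / 4 * h ^ 2 * (d3 / d1)| ≤ 1 / 4 * h ^ 2 * S := by
    rw [abs_mul, abs_of_nonneg (show (0:ℝ) ≤ 1 / 4 * h ^ 2 by positivity)]
    exact mul_le_mul_of_nonneg_left hq (by positivity)
  have g1 := abs_le.mp G1
  have g2 := abs_le.mp habs
  have hC2 : ((2 * M4 * M1 + M3 ^ 2 + M3 * M4) / (4 * δ ^ 2) + 1) * h ^ 3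
      ≤ ((2 * M4 * M1 + M3 ^ 2 + M3 * M4) / (4 * δ ^ 2) + 1) * h ^ 2 :=
    mul_le_mul_of_nonneg_left h32 (by positivity)
  rw [abs_le]
  constructor
  · linarith only [g1.1, g2.1, hC2]
  · linarith only [g1.2, g2.2, hC2]

private lemma est (h δ M1 M3 M4 S y3 y1 ym1 ym3 v d1 d2 d3 : ℝ)
    (hh : 0 < h) (hh1 : h ≤ 1) (hδ : 0 < δ)
    (h3 : |y3 - (v + 3 * h / 2 * d1 + (3 * h / 2) ^ 2 / 2 * d2 + (3 * h / 2) ^ 3 / 6 * d3)|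
      ≤ M4 * (3 * h / 2) ^ 4 / 6)
    (h1 : |y1 - (v + h / 2 * d1 + (h / 2) ^ 2 / 2 * d2 + (h / 2) ^ 3 / 6 * d3)|
      ≤ M4 * (h / 2) ^ 4 / 6)
    (hm1 : |ym1 - (v + -(h / 2) * d1 + (-(h / 2)) ^ 2 / 2 * d2 + (-(h / 2)) ^ 3 / 6 * d3)|
      ≤ M4 * (-(h / 2)) ^ 4 / 6)
    (hm3 : |ym3 - (v + -(3 * h / 2) * d1 + (-(3 * h / 2)) ^ 2 / 2 * d2
        + (-(3 * h / 2)) ^ 3 / 6 * d3)| ≤ M4 * (-(3 * h / 2)) ^ 4 / 6)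
    (hd1l : δ ≤ d1) (hd1u : |d1| ≤ M1) (hd3 : |d3| ≤ M3)
    (hD0 : δ * h ≤ y1 - ym1) (hq : |d3 / d1| ≤ S) :
    |((ym1 - ym3) - 2 * (y1 - ym1) + (y3 - y1)) / (4 * (y1 - ym1))
        - 1 / 4 * h ^ 2 * (d3 / d1)|
      ≤ ((2 * M4 * M1 + M3 ^ 2 + M3 * M4) / (4 * δ ^ 2) + 1) * h ^ 3 ∧
    |((ym1 - ym3) - 2 * (y1 - ym1) + (y3 - y1)) / (4 * (y1 - ym1))|
      ≤ (1 / 4 * S + ((2 * M4 * M1 + M3 ^ 2 + M3 * M4) / (4 * δ ^ 2) + 1) * 1) * h ^ 2 := by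
  have hM4 : 0 ≤ M4 := by
    have := (abs_nonneg _).trans h1
    nlinarith [pow_pos (show (0:ℝ) < h / 2 by linarith) 4]
  have b3 := abs_le.mp h3
  have b1 := abs_le.mp h1
  have bm1 := abs_le.mp hm1
  have bm3 := abs_le.mp hm3
  have hEN : |((ym1 - ym3) - 2 * (y1 - ym1) + (y3 - y1)) - h ^ 3 * d3| ≤ 2 * M4 * h ^ 4 := by
    rw [abs_le]
    constructor
    · linarith only [b3.1, b1.2, bm1.1, bm3.2, hM4, mul_nonneg hM4 (pow_nonneg hh.le 4)]
    · linarith only [b3.2, b1.1, bm1.2, bm3.1, hM4, mul_nonneg hM4 (pow_nonneg hh.le 4)]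
  have hED : |(y1 - ym1) - (h * d1 + h ^ 3 / 24 * d3)| ≤ M4 * h ^ 4 / 48 := by
    rw [abs_le]
    constructor
    · linarith only [b1.1, bm1.2]
    · linarith only [b1.2, bm1.1]
  exact est0 h δ M1 M3 M4 S d1 d3 _ _ hh hh1 hδ hM4 hEN hED hd1l hd1u hd3 hD0 hq

/-- on a smooth mesh generated by a smooth periodic deformation
`ψ`, the quadrature coefficients satisfy
`ω̂_k = ¼ h² ψ'''(x̄_k)/ψ'(x̄_k) + O(h³)`; in particular `|ω̂_k| ≤ C' h²`. -/
theorem statement12 (ψ : ℝ → ℝ) (hψ : ContDiff ℝ 4 ψ)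
    (hψ' : ∀ x : ℝ, 0 < deriv ψ x) (hper : ∀ x : ℝ, ψ (x + 2) = ψ x + 2) :
    ∃ h₀ : ℝ, 0 < h₀ ∧ ∃ C : ℝ, 0 < C ∧
      ∀ K : ℤ, 1 ≤ K → (1 : ℝ) / (K : ℝ) ≤ h₀ → ∀ k : ℤ,
        (|((ψ (((k : ℝ) - 1) / (K : ℝ)) - ψ (((k : ℝ) - 2) / (K : ℝ))) -
              2 * (ψ ((k : ℝ) / (K : ℝ)) - ψ (((k : ℝ) - 1) / (K : ℝ))) +
              (ψ (((k : ℝ) + 1) / (K : ℝ)) - ψ ((k : ℝ) / (K : ℝ)))) /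
              (4 * (ψ ((k : ℝ) / (K : ℝ)) - ψ (((k : ℝ) - 1) / (K : ℝ)))) -
            (1 / 4) * ((1 : ℝ) / (K : ℝ)) ^ 2 *
              (iteratedDeriv 3 ψ (((k : ℝ) - 1 / 2) / (K : ℝ)) /
                deriv ψ (((k : ℝ) - 1 / 2) / (K : ℝ)))| ≤
          C * ((1 : ℝ) / (K : ℝ)) ^ 3) ∧
        (|((ψ (((k : ℝ) - 1) / (K : ℝ)) - ψ (((k : ℝ) - 2) / (K : ℝ))) -
              2 * (ψ ((k : ℝ) / (K : ℝ)) - ψ (((k : ℝ) - 1) / (K : ℝ))) +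
              (ψ (((k : ℝ) + 1) / (K : ℝ)) - ψ ((k : ℝ) / (K : ℝ)))) /
              (4 * (ψ ((k : ℝ) / (K : ℝ)) - ψ (((k : ℝ) - 1) / (K : ℝ))))| ≤
          ((1 / 4) * sSup ((fun x => |iteratedDeriv 3 ψ x / deriv ψ x|) ''
              Set.Icc (-1 : ℝ) 1) + C * h₀) * ((1 : ℝ) / (K : ℝ)) ^ 2) := by
  -- periodicity of the derivatives
  have hp1 : Function.Periodic (deriv ψ) 2 := by
    have := per_iter ψ hper 0
    rwa [iteratedDeriv_one] at this
  have hp3 : Function.Periodic (iteratedDeriv 3 ψ) 2 := per_iter ψ hper 2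
  have hp4 : Function.Periodic (iteratedDeriv 4 ψ) 2 := per_iter ψ hper 3
  -- continuity of the derivatives
  have hc1 : Continuous (deriv ψ) := hψ.continuous_deriv (by norm_num)
  have hc3 : Continuous (iteratedDeriv 3 ψ) := hψ.continuous_iteratedDeriv 3 (by norm_num)
  have hc4 : Continuous (iteratedDeriv 4 ψ) := hψ.continuous_iteratedDeriv 4 (le_refl _)
  have hIcc : IsCompact (Set.Icc (-1 : ℝ) 1) := isCompact_Icc
  have hne : (Set.Icc (-1 : ℝ) 1).Nonempty := ⟨0, by norm_num⟩
  -- global bounds via compactness and periodicity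
  obtain ⟨z4, _, hz4⟩ := hIcc.exists_isMaxOn hne (hc4.abs.continuousOn)
  set M4 : ℝ := |iteratedDeriv 4 ψ z4| with hM4def
  have hM4 : ∀ x : ℝ, |iteratedDeriv 4 ψ x| ≤ M4 := by
    intro x
    obtain ⟨y, hy, e⟩ := per_bound hp4 x
    rw [e]
    exact hz4 hy
  obtain ⟨z3, _, hz3⟩ := hIcc.exists_isMaxOn hne (hc3.abs.continuousOn)
  set M3 : ℝ := |iteratedDeriv 3 ψ z3| with hM3def
  have hM3 : ∀ x : ℝ, |iteratedDeriv 3 ψ x| ≤ M3 := by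
    intro x
    obtain ⟨y, hy, e⟩ := per_bound hp3 x
    rw [e]
    exact hz3 hy
  obtain ⟨z1, _, hz1⟩ := hIcc.exists_isMaxOn hne (hc1.abs.continuousOn)
  set M1 : ℝ := |deriv ψ z1| with hM1def
  have hM1 : ∀ x : ℝ, |deriv ψ x| ≤ M1 := by
    intro x
    obtain ⟨y, hy, e⟩ := per_bound hp1 x
    rw [e]
    exact hz1 hy
  obtain ⟨zδ, _, hzδ⟩ := hIcc.exists_isMinOn hne (hc1.continuousOn)
  set δ : ℝ := deriv ψ zδ with hδdef
  have hδpos : 0 < δ := hψ' zδ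
  have hδglob : ∀ x : ℝ, δ ≤ deriv ψ x := by
    intro x
    obtain ⟨y, hy, e⟩ := per_bound hp1 x
    rw [e]
    exact hzδ hy
  -- the sSup bound
  set S : ℝ := sSup ((fun x => |iteratedDeriv 3 ψ x / deriv ψ x|) '' Set.Icc (-1 : ℝ) 1)
    with hSdef
  have hqc : Continuous (fun x => |iteratedDeriv 3 ψ x / deriv ψ x|) :=
    (hc3.div hc1 fun x => (hψ' x).ne').abs
  have hqper : Function.Periodic (fun x => |iteratedDeriv 3 ψ x / deriv ψ x|) 2 := by
    intro x
    simp only [hp3 x, hp1 x]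
  have hbdd : BddAbove ((fun x => |iteratedDeriv 3 ψ x / deriv ψ x|) '' Set.Icc (-1 : ℝ) 1) :=
    (hIcc.image_of_continuousOn hqc.continuousOn).bddAbove
  have hS : ∀ x : ℝ, |iteratedDeriv 3 ψ x / deriv ψ x| ≤ S := by
    intro x
    obtain ⟨y, hy, e⟩ := per_bound hqper x
    have hle : (fun x => |iteratedDeriv 3 ψ x / deriv ψ x|) y ≤ S :=
      le_csSup hbdd (Set.mem_image_of_mem _ hy)
    simpa using e.trans_le hle
  -- choose the constants
  have hCpos : 0 < (2 * M4 * M1 + M3 ^ 2 + M3 * M4) / (4 * δ ^ 2) + 1 := by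
    have : 0 ≤ (2 * M4 * M1 + M3 ^ 2 + M3 * M4) / (4 * δ ^ 2) := by positivity
    linarith
  refine ⟨1, one_pos, (2 * M4 * M1 + M3 ^ 2 + M3 * M4) / (4 * δ ^ 2) + 1, hCpos, ?_⟩
  intro K hK hKh k
  have hK1 : (1 : ℝ) ≤ (K : ℝ) := by exact_mod_cast hK
  have hKpos : (0 : ℝ) < (K : ℝ) := by linarith
  have hKne : (K : ℝ) ≠ 0 := hKpos.ne'
  set h : ℝ := (1 : ℝ) / (K : ℝ) with hhdef
  have hh : 0 < h := by positivity
  have hh1 : h ≤ 1 := hKh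
  set m : ℝ := ((k : ℝ) - 1 / 2) / (K : ℝ) with hmdef
  -- rewrite the four mesh points around the midpoint m
  have ep3 : ((k : ℝ) + 1) / (K : ℝ) = m + 3 * h / 2 := by
    rw [hmdef, hhdef]; field_simp; ring
  have ep1 : (k : ℝ) / (K : ℝ) = m + h / 2 := by
    rw [hmdef, hhdef]; field_simp; ring
  have em1 : ((k : ℝ) - 1) / (K : ℝ) = m + -(h / 2) := by
    rw [hmdef, hhdef]; field_simp; ring
  have em3 : ((k : ℝ) - 2) / (K : ℝ) = m + -(3 * h / 2) := by
    rw [hmdef, hhdef]; field_simp; ring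
  rw [ep3, ep1, em1, em3]
  -- the four Taylor expansions around m
  have t3 := taylor4 ψ hψ M4 hM4 m (3 * h / 2)
  have t1 := taylor4 ψ hψ M4 hM4 m (h / 2)
  have tm1 := taylor4 ψ hψ M4 hM4 m (-(h / 2))
  have tm3 := taylor4 ψ hψ M4 hM4 m (-(3 * h / 2))
  rw [iteratedDeriv_one] at t3 t1 tm1 tm3
  -- lower bound for the element size via the mean value theorem
  have hmlt : m + -(h / 2) < m + h / 2 := by linarith
  obtain ⟨c, _, hc⟩ := exists_hasDerivAt_eq_slope ψ (deriv ψ) hmlt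
    (hψ.continuous.continuousOn)
    (fun x _ => ((hψ.differentiable (by norm_num)) x).hasDerivAt)
  have hD0 : δ * h ≤ ψ (m + h / 2) - ψ (m + -(h / 2)) := by
    have harg : (m + h / 2) - (m + -(h / 2)) = h := by ring
    rw [harg] at hc
    have heq := (div_eq_iff hh.ne').mp hc.symm
    have hge := mul_le_mul_of_nonneg_right (hδglob c) hh.le
    linarith
  exact est h δ M1 M3 M4 S (ψ (m + 3 * h / 2)) (ψ (m + h / 2)) (ψ (m + -(h / 2)))
    (ψ (m + -(3 * h / 2))) (ψ m) (deriv ψ m) (iteratedDeriv 2 ψ m) (iteratedDeriv 3 ψ m)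
    hh hh1 hδpos t3 t1 tm1 tm3 (hδglob m) (hM1 m) (hM3 m) hD0 (hS m)
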